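/- For every (a,b) ∈ F² with (a,b) ≠ (0,0), the linear map λ_{a,b} is a collineation of the Hall affine plane A_H, and it acts on lines as follows. On vertical lines: λ_{a,b}([c]) = [b·c] if a = 0, and λ_{a,b}([c]) = [(b/a, 0), −((b² − abr − a²s)/a)·c] if a ≠ 0. On type 1 lines with slope m = (m₁, 0): λ_{a,b}([m,k]) = [m, b·k] if a = 0; λ_{a,b}([m,k]) = [a·k] (a vertical line) if a ≠ 0 and m₁ = r − b/a; and λ_{a,b}([m,k]) = [((as + m₁b)/(am₁ − ar + b), 0), ((b² − abr − a²s)/(am₁ − ar + b))·k] if a ≠ 0 and m₁ ≠ r − b/a. On type 2 lines (m₂ ≠ 0): λ_{a,b}([m, k]) = [m, −a·(k·m) + b·k], where k·m is the Hall product and the remaining products are scalar multiples of elements of H by elements of F. -/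

import Mathlib

open Polynomial

/-- The Hall system multiplication on `F × F`, with defining polynomial `x^2 - r*x - s`. -/
def hallMul {F : Type*} [Field F] [DecidableEq F] (r s : F) (a b : F × F) : F × F :=
  if b.2 = 0 then (a.1 * b.1, a.2 * b.1)
  else (a.1 * b.1 - a.2 * b.2⁻¹ * (b.1 ^ 2 - r * b.1 - s),
        a.1 * b.2 - a.2 * b.1 + a.2 * r)

/-- Vertical line `[c] = {(c, y)}` in the Hall affine plane. -/
def vertLine {F : Type*} (c : F × F) : Set ((F × F) × (F × F)) := {P | P.1 = c}

/-- Non-vertical line `[m, k] = {(x, x·m + k)}` in the Hall affine plane. -/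
def slopeLine {F : Type*} [Field F] [DecidableEq F] (r s : F) (m k : F × F) :
    Set ((F × F) × (F × F)) :=
  {P | P.2 = hallMul r s P.1 m + k}

/-- The lines of the Hall affine plane `A_H`. -/
def IsHallLine {F : Type*} [Field F] [DecidableEq F] (r s : F)
    (ℓ : Set ((F × F) × (F × F))) : Prop :=
  (∃ c : F × F, ℓ = vertLine c) ∨ ∃ m k : F × F, ℓ = slopeLine r s m k

/-- A collineation of the Hall affine plane: a bijection of the point set mapping
every line onto a line. -/
def IsCollineation {F : Type*} [Field F] [DecidableEq F] (r s : F)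
    (φ : (F × F) × (F × F) → (F × F) × (F × F)) : Prop :=
  Function.Bijective φ ∧ ∀ ℓ, IsHallLine r s ℓ → IsHallLine r s (φ '' ℓ)

/-- The linear map `λ_{a,b} : (x,y) ↦ ((-ar+b)·x + a·y, as·x + b·y)`,
where scalars act componentwise. -/
def lambdaMap {F : Type*} [Field F] (r s a b : F) :
    (F × F) × (F × F) → (F × F) × (F × F) :=
  fun P => ((-(a * r) + b) • P.1 + a • P.2, (a * s) • P.1 + b • P.2)


set_option linter.unusedSectionVars false

lemma noRoot {F : Type*} [Field F] (r s : F)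
    (hirr : Irreducible (X ^ 2 - C r * X - C s : F[X])) :
    ∀ t : F, t ^ 2 - r * t - s ≠ 0 := by
  intro t ht
  have hroot : (X ^ 2 - C r * X - C s : F[X]).IsRoot t := by
    simp [IsRoot, ht]
  obtain ⟨c, hc⟩ := (dvd_iff_isRoot.mpr hroot)
  rcases hirr.isUnit_or_isUnit hc with h | h
  · exact Polynomial.not_isUnit_X_sub_C t h
  · have hdeg : (X ^ 2 - C r * X - C s : F[X]).natDegree = 2 := by
      compute_degree!
    have h1 : ((X - C t) * c).natDegree = 1 := by
      rw [natDegree_mul (X_sub_C_ne_zero t) (by rintro rfl; simp at hc; exact hirr.ne_zero hc),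
        natDegree_X_sub_C, Polynomial.natDegree_eq_zero_of_isUnit h]
    rw [hc, h1] at hdeg
    omega

/-- The inverse of `lambdaMap`. -/
def psiMap {F : Type*} [Field F] (r s a b : F) :
    (F × F) × (F × F) → (F × F) × (F × F) :=
  fun Q => ((b ^ 2 - a * b * r - a ^ 2 * s)⁻¹ • (b • Q.1 - a • Q.2),
            (b ^ 2 - a * b * r - a ^ 2 * s)⁻¹ • ((-(a * s)) • Q.1 + (-(a * r) + b) • Q.2))

lemma psi_lambda {F : Type*} [Field F] {r s a b : F}
    (hD : b ^ 2 - a * b * r - a ^ 2 * s ≠ 0) :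
    ∀ P, psiMap r s a b (lambdaMap r s a b P) = P := by
  have hD' : b * (b - a * r) - a ^ 2 * s ≠ 0 := by intro h; exact hD (by linear_combination h)
  rintro ⟨⟨x1, x2⟩, ⟨y1, y2⟩⟩
  simp only [psiMap, lambdaMap, Prod.smul_mk, Prod.mk_add_mk, Prod.mk_sub_mk, smul_eq_mul,
    Prod.mk.injEq]
  refine ⟨⟨?_, ?_⟩, ?_, ?_⟩ <;> field_simp <;> ring

lemma lambda_psi {F : Type*} [Field F] {r s a b : F}
    (hD : b ^ 2 - a * b * r - a ^ 2 * s ≠ 0) :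
    ∀ Q, lambdaMap r s a b (psiMap r s a b Q) = Q := by
  have hD' : b * (b - a * r) - a ^ 2 * s ≠ 0 := by intro h; exact hD (by linear_combination h)
  rintro ⟨⟨x1, x2⟩, ⟨y1, y2⟩⟩
  simp only [psiMap, lambdaMap, Prod.smul_mk, Prod.mk_add_mk, Prod.mk_sub_mk, smul_eq_mul,
    Prod.mk.injEq]
  refine ⟨⟨?_, ?_⟩, ?_, ?_⟩ <;> field_simp <;> ring

lemma image_eq_of {α β : Type*} {φ : α → β} {ψ : β → α}
    (hφψ : ∀ Q, φ (ψ Q) = Q) {ℓ : Set α} {ℓ' : Set β}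
    (h1 : ∀ P ∈ ℓ, φ P ∈ ℓ') (h2 : ∀ Q ∈ ℓ', ψ Q ∈ ℓ) : φ '' ℓ = ℓ' := by
  apply Set.Subset.antisymm
  · rintro Q ⟨P, hP, rfl⟩; exact h1 P hP
  · intro Q hQ; exact ⟨ψ Q, h2 Q hQ, hφψ Q⟩

section
variable {F : Type*} [Field F] [DecidableEq F] {r s a b : F}

lemma img_vert_a0 (hD : b ^ 2 - a * b * r - a ^ 2 * s ≠ 0) (ha : a = 0) (hb : b ≠ 0)
    (c : F × F) :
    lambdaMap r s a b '' vertLine c = vertLine (b • c) := by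
  have hD' : b * (b - a * r) - a ^ 2 * s ≠ 0 := by intro h; exact hD (by linear_combination h)
  subst ha
  obtain ⟨c1, c2⟩ := c
  apply image_eq_of (lambda_psi hD)
  · rintro ⟨⟨x1, x2⟩, ⟨y1, y2⟩⟩ hP
    simp only [vertLine, Set.mem_setOf_eq, Prod.mk.injEq] at hP
    obtain ⟨rfl, rfl⟩ := hP
    simp [lambdaMap, vertLine]
  · rintro ⟨⟨u1, u2⟩, ⟨v1, v2⟩⟩ hQ
    simp only [vertLine, Set.mem_setOf_eq, Prod.smul_mk, smul_eq_mul, Prod.mk.injEq] at hQ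
    obtain ⟨rfl, rfl⟩ := hQ
    simp only [psiMap, vertLine, Set.mem_setOf_eq, Prod.smul_mk, Prod.mk_add_mk,
      Prod.mk_sub_mk, smul_eq_mul, Prod.mk.injEq]
    constructor <;> field_simp <;> ring

lemma img_vert_a1 (hD : b ^ 2 - a * b * r - a ^ 2 * s ≠ 0) (ha : a ≠ 0) (c : F × F) :
    lambdaMap r s a b '' vertLine c =
      slopeLine r s (b / a, 0) ((-((b ^ 2 - a * b * r - a ^ 2 * s) / a)) • c) := by
  have hD' : b * (b - a * r) - a ^ 2 * s ≠ 0 := by intro h; exact hD (by linear_combination h)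
  obtain ⟨c1, c2⟩ := c
  apply image_eq_of (lambda_psi hD)
  · rintro ⟨⟨x1, x2⟩, ⟨y1, y2⟩⟩ hP
    simp only [vertLine, Set.mem_setOf_eq, Prod.mk.injEq] at hP
    obtain ⟨rfl, rfl⟩ := hP
    simp only [lambdaMap, slopeLine, hallMul, Set.mem_setOf_eq, Prod.smul_mk, Prod.mk_add_mk,
      smul_eq_mul, if_pos rfl, ite_true, Prod.mk.injEq]
    constructor <;> field_simp <;> ring
  · rintro ⟨⟨u1, u2⟩, ⟨v1, v2⟩⟩ hQ
    simp only [slopeLine, hallMul, Set.mem_setOf_eq, Prod.smul_mk, Prod.mk_add_mk,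
      smul_eq_mul, if_pos rfl, ite_true, Prod.mk.injEq] at hQ
    obtain ⟨rfl, rfl⟩ := hQ
    simp only [psiMap, vertLine, Set.mem_setOf_eq, Prod.smul_mk, Prod.mk_add_mk,
      Prod.mk_sub_mk, smul_eq_mul, Prod.mk.injEq]
    constructor <;> field_simp <;> ring

end

section
variable {F : Type*} [Field F] [DecidableEq F] {r s a b : F}

lemma img_t1_a0 (hD : b ^ 2 - a * b * r - a ^ 2 * s ≠ 0) (ha : a = 0) (hb : b ≠ 0)
    (m1 : F) (k : F × F) :
    lambdaMap r s a b '' slopeLine r s (m1, 0) k = slopeLine r s (m1, 0) (b • k) := by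
  have hD' : b * (b - a * r) - a ^ 2 * s ≠ 0 := by intro h; exact hD (by linear_combination h)
  subst ha
  obtain ⟨k1, k2⟩ := k
  apply image_eq_of (lambda_psi hD)
  · rintro ⟨⟨x1, x2⟩, ⟨y1, y2⟩⟩ hP
    simp only [slopeLine, hallMul, Set.mem_setOf_eq, Prod.mk_add_mk, ite_true,
      Prod.mk.injEq] at hP
    obtain ⟨rfl, rfl⟩ := hP
    simp only [lambdaMap, slopeLine, hallMul, Set.mem_setOf_eq, Prod.smul_mk, Prod.mk_add_mk,
      smul_eq_mul, ite_true, Prod.mk.injEq]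
    constructor <;> ring
  · rintro ⟨⟨u1, u2⟩, ⟨v1, v2⟩⟩ hQ
    simp only [slopeLine, hallMul, Set.mem_setOf_eq, Prod.smul_mk, Prod.mk_add_mk,
      smul_eq_mul, ite_true, Prod.mk.injEq] at hQ
    obtain ⟨rfl, rfl⟩ := hQ
    simp only [psiMap, slopeLine, hallMul, Set.mem_setOf_eq, Prod.smul_mk, Prod.mk_add_mk,
      Prod.mk_sub_mk, smul_eq_mul, ite_true, Prod.mk.injEq]
    constructor <;> field_simp <;> ring

lemma img_t1_vert (hD : b ^ 2 - a * b * r - a ^ 2 * s ≠ 0) (ha : a ≠ 0)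
    (m1 : F) (hm1 : m1 = r - b / a) (k : F × F) :
    lambdaMap r s a b '' slopeLine r s (m1, 0) k = vertLine (a • k) := by
  have hD' : b * (b - a * r) - a ^ 2 * s ≠ 0 := by intro h; exact hD (by linear_combination h)
  subst hm1
  obtain ⟨k1, k2⟩ := k
  apply image_eq_of (lambda_psi hD)
  · rintro ⟨⟨x1, x2⟩, ⟨y1, y2⟩⟩ hP
    simp only [slopeLine, hallMul, Set.mem_setOf_eq, Prod.mk_add_mk, ite_true,
      Prod.mk.injEq] at hP
    obtain ⟨rfl, rfl⟩ := hP
    simp only [lambdaMap, vertLine, Set.mem_setOf_eq, Prod.smul_mk, Prod.mk_add_mk,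
      smul_eq_mul, Prod.mk.injEq]
    constructor <;> field_simp <;> ring
  · rintro ⟨⟨u1, u2⟩, ⟨v1, v2⟩⟩ hQ
    simp only [vertLine, Set.mem_setOf_eq, Prod.smul_mk, smul_eq_mul, Prod.mk.injEq] at hQ
    obtain ⟨rfl, rfl⟩ := hQ
    simp only [psiMap, slopeLine, hallMul, Set.mem_setOf_eq, Prod.smul_mk, Prod.mk_add_mk,
      Prod.mk_sub_mk, smul_eq_mul, ite_true, Prod.mk.injEq]
    constructor <;> field_simp <;> ring

lemma img_t1_slope (hD : b ^ 2 - a * b * r - a ^ 2 * s ≠ 0) (ha : a ≠ 0)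
    (m1 : F) (hm1 : m1 ≠ r - b / a) (k : F × F) :
    lambdaMap r s a b '' slopeLine r s (m1, 0) k =
      slopeLine r s ((a * s + m1 * b) / (a * m1 - a * r + b), 0)
        (((b ^ 2 - a * b * r - a ^ 2 * s) / (a * m1 - a * r + b)) • k) := by
  have hD' : b * (b - a * r) - a ^ 2 * s ≠ 0 := by intro h; exact hD (by linear_combination h)
  have he : a * m1 - a * r + b ≠ 0 := by
    intro h0
    apply hm1
    field_simp
    linear_combination h0
  have he' : a * (m1 - r) + b ≠ 0 := by intro h; exact he (by linear_combination h)
  obtain ⟨k1, k2⟩ := k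
  apply image_eq_of (lambda_psi hD)
  · rintro ⟨⟨x1, x2⟩, ⟨y1, y2⟩⟩ hP
    simp only [slopeLine, hallMul, Set.mem_setOf_eq, Prod.mk_add_mk, ite_true,
      Prod.mk.injEq] at hP
    obtain ⟨rfl, rfl⟩ := hP
    simp only [lambdaMap, slopeLine, hallMul, Set.mem_setOf_eq, Prod.smul_mk, Prod.mk_add_mk,
      smul_eq_mul, ite_true, Prod.mk.injEq]
    constructor <;> field_simp <;> ring
  · rintro ⟨⟨u1, u2⟩, ⟨v1, v2⟩⟩ hQ
    simp only [slopeLine, hallMul, Set.mem_setOf_eq, Prod.smul_mk, Prod.mk_add_mk,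
      smul_eq_mul, ite_true, Prod.mk.injEq] at hQ
    obtain ⟨rfl, rfl⟩ := hQ
    simp only [psiMap, slopeLine, hallMul, Set.mem_setOf_eq, Prod.smul_mk, Prod.mk_add_mk,
      Prod.mk_sub_mk, smul_eq_mul, ite_true, Prod.mk.injEq]
    constructor <;> field_simp <;> ring

lemma img_t2 (hD : b ^ 2 - a * b * r - a ^ 2 * s ≠ 0) (m k : F × F) (hm2 : m.2 ≠ 0) :
    lambdaMap r s a b '' slopeLine r s m k =
      slopeLine r s m (-(a • hallMul r s k m) + b • k) := by
  have hD' : b * (b - a * r) - a ^ 2 * s ≠ 0 := by intro h; exact hD (by linear_combination h)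
  obtain ⟨m1, m2⟩ := m
  obtain ⟨k1, k2⟩ := k
  simp only at hm2
  apply image_eq_of (lambda_psi hD)
  · rintro ⟨⟨x1, x2⟩, ⟨y1, y2⟩⟩ hP
    simp only [slopeLine, hallMul, Set.mem_setOf_eq, Prod.mk_add_mk, if_neg hm2,
      Prod.smul_mk, Prod.neg_mk, smul_eq_mul, Prod.mk.injEq] at hP ⊢
    obtain ⟨rfl, rfl⟩ := hP
    simp only [lambdaMap, Prod.smul_mk, Prod.mk_add_mk, smul_eq_mul, Prod.mk.injEq]
    constructor <;> field_simp <;> ring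
  · rintro ⟨⟨u1, u2⟩, ⟨v1, v2⟩⟩ hQ
    simp only [slopeLine, hallMul, Set.mem_setOf_eq, Prod.mk_add_mk, if_neg hm2,
      Prod.smul_mk, Prod.neg_mk, smul_eq_mul, Prod.mk.injEq] at hQ ⊢
    obtain ⟨rfl, rfl⟩ := hQ
    simp only [psiMap, Prod.smul_mk, Prod.mk_add_mk, Prod.mk_sub_mk, smul_eq_mul, Prod.mk.injEq]
    constructor <;> field_simp <;> ring

end

/-- Every linear map `λ_{a,b}` (with `(a,b) ≠ (0,0)`) is a collineation of the Hall affine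
plane, with the stated action on vertical lines, type 1 lines, and type 2 lines. -/
theorem lambda_collineation {F : Type*} [Field F] [Fintype F] [DecidableEq F]
    (q : ℕ) (hq : Fintype.card F = q) (r s : F)
    (hirr : Irreducible (X ^ 2 - C r * X - C s : F[X]))
    (a b : F) (hab : (a, b) ≠ ((0 : F), (0 : F))) :
    IsCollineation r s (lambdaMap r s a b) ∧
    (∀ c : F × F,
      (a = 0 → lambdaMap r s a b '' vertLine c = vertLine (b • c)) ∧
      (a ≠ 0 → lambdaMap r s a b '' vertLine c =
        slopeLine r s (b / a, 0) ((-((b ^ 2 - a * b * r - a ^ 2 * s) / a)) • c))) ∧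
    (∀ m k : F × F, m.2 = 0 →
      (a = 0 → lambdaMap r s a b '' slopeLine r s m k = slopeLine r s m (b • k)) ∧
      (a ≠ 0 → m.1 = r - b / a →
        lambdaMap r s a b '' slopeLine r s m k = vertLine (a • k)) ∧
      (a ≠ 0 → m.1 ≠ r - b / a →
        lambdaMap r s a b '' slopeLine r s m k =
          slopeLine r s ((a * s + m.1 * b) / (a * m.1 - a * r + b), 0)
            (((b ^ 2 - a * b * r - a ^ 2 * s) / (a * m.1 - a * r + b)) • k))) ∧
    (∀ m k : F × F, m.2 ≠ 0 →
      lambdaMap r s a b '' slopeLine r s m k =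
        slopeLine r s m (-(a • hallMul r s k m) + b • k)) := by
  have hD : b ^ 2 - a * b * r - a ^ 2 * s ≠ 0 := by
    by_cases ha : a = 0
    · subst ha
      have hb : b ≠ 0 := by simpa using hab
      simpa using pow_ne_zero 2 hb
    · intro h0
      apply noRoot r s hirr (b / a)
      field_simp
      linear_combination h0
  have hb0 : a = 0 → b ≠ 0 := by
    rintro rfl rfl; exact hab rfl
  have hbij : Function.Bijective (lambdaMap r s a b) :=
    Function.bijective_iff_has_inverse.mpr ⟨psiMap r s a b, psi_lambda hD, lambda_psi hD⟩
  refine ⟨⟨hbij, ?_⟩, ?_, ?_, ?_⟩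
  · rintro ℓ (⟨c, rfl⟩ | ⟨m, k, rfl⟩)
    · by_cases ha : a = 0
      · exact Or.inl ⟨b • c, img_vert_a0 hD ha (hb0 ha) c⟩
      · exact Or.inr ⟨_, _, img_vert_a1 hD ha c⟩
    · obtain ⟨m1, m2⟩ := m
      by_cases hm2 : m2 = 0
      · subst hm2
        by_cases ha : a = 0
        · exact Or.inr ⟨_, _, img_t1_a0 hD ha (hb0 ha) m1 k⟩
        · by_cases hm1 : m1 = r - b / a
          · exact Or.inl ⟨_, img_t1_vert hD ha m1 hm1 k⟩
          · exact Or.inr ⟨_, _, img_t1_slope hD ha m1 hm1 k⟩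
      · exact Or.inr ⟨_, _, img_t2 hD (m1, m2) k hm2⟩
  · intro c
    exact ⟨fun ha => img_vert_a0 hD ha (hb0 ha) c, fun ha => img_vert_a1 hD ha c⟩
  · intro m k hm
    obtain ⟨m1, m2⟩ := m
    dsimp only at hm
    subst hm
    exact ⟨fun ha => img_t1_a0 hD ha (hb0 ha) m1 k,
      fun ha h1 => img_t1_vert hD ha m1 h1 k,
      fun ha h1 => img_t1_slope hD ha m1 h1 k⟩
  · intro m k hm
    exact img_t2 hD m k hm
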